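/- (Corollary, integrality of the expansion of zQ(z).) The formal power series exp(Σ_{k≥1} (m_k/k) t^k) ∈ ℚ[[t]] has all of its coefficients in ℤ; i.e. there exist integers A_k (k ≥ 1) with exp(Σ_{k≥1} (m_k/k) t^k) = 1 + Σ_{k≥1} A_k t^k. -/

import Mathlib

open scoped BigOperators

/-- The Laurent polynomial `W = ∑_{e,f ∈ E} c_e c_f u^{e-f}`, as an element of the group
algebra `ℤ[ℤ^n]` (the ring of Laurent polynomials in `n` variables over `ℤ`). -/
noncomputable def WL {n : ℕ} (E : Finset (Fin n → ℤ)) (c : (Fin n → ℤ) → ℕ) :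
    AddMonoidAlgebra ℤ (Fin n → ℤ) :=
  ∑ e ∈ E, ∑ f ∈ E, AddMonoidAlgebra.single (e - f) ((c e : ℤ) * (c f : ℤ))

/-- The `k`-th moment `m_k`: the constant term of the Laurent polynomial `W^k`. -/
noncomputable def moment {n : ℕ} (E : Finset (Fin n → ℤ)) (c : (Fin n → ℤ) → ℕ)
    (k : ℕ) : ℤ :=
  (WL E c ^ k).coeff 0

/-- The exponential `exp(S) = ∑_j S^j / j!` of a power series `S` (with zero constant term);
since `coeff N (S^j) = 0` for `j > N` when `S` has zero constant term, the `N`-th coefficient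
is given by the finite sum below. -/
noncomputable def expOf (S : PowerSeries ℚ) : PowerSeries ℚ :=
  PowerSeries.mk fun N =>
    ∑ j ∈ Finset.range (N + 1), (PowerSeries.coeff N (S ^ j)) / (j.factorial : ℚ)

section Aux

open Finset ArithmeticFunction PowerSeries
open scoped ArithmeticFunction.Moebius


section RingCong
variable {R : Type*} [CommRing R]

lemma geom_aux {p : ℕ} (hp : p.Prime) {x y : R} (h : (p:R) ∣ x - y) :
    (p:R) ∣ ∑ i ∈ range p, x ^ i * y ^ (p - 1 - i) := by
  have hyx : (p:R) ∣ y - x := by simpa using dvd_neg.2 h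
  have h2 : ∑ i ∈ range p, x ^ i * x ^ (p - 1 - i) = (p:R) * x ^ (p-1) := by
    rw [Finset.sum_congr rfl (fun i hi => ?_), Finset.sum_const, Finset.card_range,
      nsmul_eq_mul]
    rw [← pow_add]
    congr 1
    have := Finset.mem_range.1 hi
    omega
  have h1 : (p:R) ∣ ∑ i ∈ range p, x ^ i * y ^ (p - 1 - i) - ∑ i ∈ range p, x ^ i * x ^ (p - 1 - i) := by
    rw [← Finset.sum_sub_distrib]
    refine Finset.dvd_sum fun i _ => ?_
    have e : x ^ i * y ^ (p-1-i) - x ^ i * x ^ (p-1-i) = (y ^ (p-1-i) - x ^ (p-1-i)) * x ^ i := by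
      ring
    rw [e]
    exact (hyx.trans (sub_dvd_pow_sub_pow y x _)).mul_right _
  have := dvd_add h1 (h2 ▸ Dvd.intro _ rfl)
  simpa using this

lemma dvd_pow_p_sub {p : ℕ} (hp : p.Prime) {x y : R} (h : (p:R) ∣ x - y) :
    ∀ a : ℕ, (p:R) ^ (a+1) ∣ x ^ (p ^ a) - y ^ (p ^ a) := by
  intro a
  induction a with
  | zero => simpa using h
  | succ a ih =>
    have hxy : (p:R) ∣ x ^ (p^a) - y ^ (p^a) := h.trans (sub_dvd_pow_sub_pow x y _)
    have key : x ^ (p ^ (a+1)) - y ^ (p ^ (a+1))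
        = (∑ i ∈ range p, (x ^ (p^a)) ^ i * (y ^ (p^a)) ^ (p - 1 - i)) * (x ^ (p^a) - y ^ (p^a)) := by
      rw [geom_sum₂_mul, ← pow_mul, ← pow_mul, pow_succ, mul_comm (p^a)]
    rw [key, pow_succ, mul_comm ((p:R)^(a+1))]
    exact mul_dvd_mul (geom_aux hp hxy) ih
end RingCong

section Frob

variable {G : Type*} [AddCommGroup G]

/-- multiplication by `p` as an additive hom. -/
def pSmulHom (p : ℕ) : G →+ G where
  toFun g := p • g
  map_zero' := smul_zero _
  map_add' a b := smul_add _ a b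

noncomputable def phiP (p : ℕ) : AddMonoidAlgebra ℤ G →+* AddMonoidAlgebra ℤ G :=
  AddMonoidAlgebra.mapDomainRingHom ℤ (pSmulHom (G := G) p)

lemma phiP_single (p : ℕ) (a : G) (b : ℤ) :
    phiP p (AddMonoidAlgebra.single a b) = AddMonoidAlgebra.single (p • a) b := by
  simp [phiP, AddMonoidAlgebra.mapDomainRingHom, Finsupp.mapDomain_single, pSmulHom]

lemma fermat_int (p : ℕ) (hp : p.Prime) (b : ℤ) : (p:ℤ) ∣ b ^ p - b := by
  haveI : Fact p.Prime := ⟨hp⟩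
  rw [← ZMod.intCast_zmod_eq_zero_iff_dvd]
  push_cast
  rw [ZMod.pow_card]
  ring

lemma natCast_AMA (d : ℕ) : ((d : ℕ) : AddMonoidAlgebra ℤ G) = AddMonoidAlgebra.single 0 (d:ℤ) := by
  rw [AddMonoidAlgebra.natCast_def]

lemma dvd_single_of_dvd (d : ℕ) (a : G) (b : ℤ) (h : (d:ℤ) ∣ b) :
    ((d:ℕ) : AddMonoidAlgebra ℤ G) ∣ AddMonoidAlgebra.single a b := by
  obtain ⟨e, rfl⟩ := h
  rw [natCast_AMA]
  exact ⟨AddMonoidAlgebra.single a e, by rw [AddMonoidAlgebra.single_mul_single, zero_add]⟩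

lemma frob_cong_sum [DecidableEq G] (p : ℕ) (hp : p.Prime) (s : Finset G) (w : G → ℤ) :
    ((p:ℕ) : AddMonoidAlgebra ℤ G) ∣
      (∑ g ∈ s, AddMonoidAlgebra.single g (w g)) ^ p
        - phiP p (∑ g ∈ s, AddMonoidAlgebra.single g (w g)) := by
  induction s using Finset.induction with
  | empty => simp [zero_pow hp.ne_zero]
  | insert a s hnot ih =>
    rw [Finset.sum_insert hnot]
    obtain ⟨r, hr⟩ := exists_add_pow_prime_eq hp (AddMonoidAlgebra.single a (w a))
      (∑ g ∈ s, AddMonoidAlgebra.single g (w g))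
    have hsingle : ((p:ℕ) : AddMonoidAlgebra ℤ G) ∣
        (AddMonoidAlgebra.single a (w a)) ^ p - phiP p (AddMonoidAlgebra.single a (w a)) := by
      rw [AddMonoidAlgebra.single_pow, phiP_single, ← AddMonoidAlgebra.single_sub]
      exact dvd_single_of_dvd p _ _ (fermat_int p hp (w a))
    have key : (AddMonoidAlgebra.single a (w a) + ∑ g ∈ s, AddMonoidAlgebra.single g (w g)) ^ p
        - phiP p (AddMonoidAlgebra.single a (w a) + ∑ g ∈ s, AddMonoidAlgebra.single g (w g))
        = ((AddMonoidAlgebra.single a (w a)) ^ p - phiP p (AddMonoidAlgebra.single a (w a)))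
          + ((∑ g ∈ s, AddMonoidAlgebra.single g (w g)) ^ p
              - phiP p (∑ g ∈ s, AddMonoidAlgebra.single g (w g))) + (p:ℕ) * (AddMonoidAlgebra.single a (w a) * (∑ g ∈ s, AddMonoidAlgebra.single g (w g)) * r) := by
      rw [hr, map_add]; ring
    rw [key]
    exact dvd_add (dvd_add hsingle ih) ⟨_, rfl⟩

lemma frob_cong (p : ℕ) (hp : p.Prime) (X : AddMonoidAlgebra ℤ G) :
    ((p:ℕ) : AddMonoidAlgebra ℤ G) ∣ X ^ p - phiP p X := by
  have hX : X = ∑ g ∈ X.coeff.support, AddMonoidAlgebra.single g (X.coeff g) := by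
    exact (AddMonoidAlgebra.sum_coeff_single X).symm
  classical
  rw [hX]
  exact frob_cong_sum p hp _ _

end Frob

section Gauss
variable {G : Type*} [AddCommGroup G]

lemma coeff_dvd_of_dvd (d : ℕ) (Y : AddMonoidAlgebra ℤ G) (h : ((d:ℕ) : AddMonoidAlgebra ℤ G) ∣ Y)
    (g : G) : (d:ℤ) ∣ Y.coeff g := by
  obtain ⟨V, rfl⟩ := h
  rw [natCast_AMA]
  rw [AddMonoidAlgebra.coeff_single_zero_mul]
  exact ⟨V.coeff g, rfl⟩

lemma phiP_apply_zero (p : ℕ) (hinj : Function.Injective (fun g : G => p • g))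
    (Z : AddMonoidAlgebra ℤ G) : (phiP p Z).coeff 0 = Z.coeff 0 := by
  change (Finsupp.mapDomain (pSmulHom (G := G) p) Z.coeff) 0 = Z.coeff 0
  have h0 : (pSmulHom (G := G) p) 0 = 0 := map_zero _
  conv_lhs => rw [← h0]
  exact Finsupp.mapDomain_apply hinj Z.coeff 0

lemma gauss_cong_general (p u a : ℕ) (hp : p.Prime) (ha : 1 ≤ a)
    (hinj : Function.Injective (fun g : G => p • g)) (W : AddMonoidAlgebra ℤ G) :
    ((p:ℤ)^a) ∣ (W ^ (p^a * u)).coeff 0 - (W ^ (p^(a-1) * u)).coeff 0 := by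
  have h := frob_cong p hp W
  have key := dvd_pow_p_sub hp h (a-1)
  have ha' : a - 1 + 1 = a := by omega
  rw [ha'] at key
  have key2 := key.trans (sub_dvd_pow_sub_pow ((W^p)^(p^(a-1))) ((phiP p W)^(p^(a-1))) u)
  have e1 : ((W^p)^(p^(a-1)))^u = W ^ (p^a * u) := by
    rw [← pow_mul, ← pow_mul]
    congr 1
    have : p * p ^ (a-1) = p ^ a := by rw [← pow_succ', ha']
    rw [← this]; ring
  have e2 : ((phiP p W)^(p^(a-1)))^u = phiP p (W ^ (p^(a-1) * u)) := by
    rw [← pow_mul, ← map_pow]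
  rw [e1, e2] at key2
  have key3 : ((p^a : ℕ) : AddMonoidAlgebra ℤ G) ∣ W ^ (p^a*u) - phiP p (W ^ (p^(a-1)*u)) := by
    rw [Nat.cast_pow]; exact key2
  have := coeff_dvd_of_dvd (p^a) _ key3 0
  rw [AddMonoidAlgebra.coeff_sub, Finsupp.sub_apply, phiP_apply_zero p hinj] at this
  rw [Nat.cast_pow] at this
  exact this

end Gauss

lemma int_dvd_of_prime_pow_dvd (k : ℕ) (hk : k ≠ 0) (T : ℤ)
    (h : ∀ p : ℕ, p.Prime → ((p:ℤ)) ^ (k.factorization p) ∣ T) : (k:ℤ) ∣ T := by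
  rcases eq_or_ne T 0 with rfl | hT
  · exact dvd_zero _
  rw [← Int.natAbs_dvd_natAbs, Int.natAbs_natCast]
  have hN0 : T.natAbs ≠ 0 := Int.natAbs_ne_zero.2 hT
  rw [← Nat.factorization_le_iff_dvd hk hN0]
  intro p
  by_cases hp : p.Prime
  · have := h p hp
    rw [← Int.natAbs_dvd_natAbs] at this
    simp only [Int.natAbs_pow, Int.natAbs_natCast] at this
    exact (Nat.Prime.pow_dvd_iff_le_factorization hp hN0).1 this
  · simp [Nat.factorization_eq_zero_of_not_prime _ hp]

variable (m : ℕ → ℤ)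

lemma sm_dvd (HG : ∀ p a u : ℕ, p.Prime → 1 ≤ a →
      ((p:ℤ))^a ∣ m (p^a * u) - m (p^(a-1) * u))
    (k : ℕ) (hk : k ≠ 0) :
    (k:ℤ) ∣ ∑ d ∈ k.divisors, (μ d : ℤ) * m (k / d) := by
  apply int_dvd_of_prime_pow_dvd k hk
  intro p hp
  set a := k.factorization p with ha
  rcases Nat.eq_zero_or_pos a with ha0 | ha1
  · rw [ha0]; simp
  set u := ordCompl[p] k with hu
  have hku : p ^ a * u = k := Nat.ordProj_mul_ordCompl_eq_self k p
  have hpu : ¬ p ∣ u := Nat.not_dvd_ordCompl hp hk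
  have hu0 : u ≠ 0 := by
    intro h0; rw [h0, mul_zero] at hku; exact hk hku.symm
  have hp1 : 1 ≤ p := hp.one_lt.le
  have hpow : p ^ a = p * p ^ (a - 1) := by
    conv_lhs => rw [show a = 1 + (a-1) by omega]
    rw [pow_add, pow_one]
  have hfilter : ∑ d ∈ k.divisors, (μ d : ℤ) * m (k / d)
      = ∑ d ∈ k.divisors.filter Squarefree, (μ d : ℤ) * m (k / d) := by
    rw [Finset.sum_filter_of_ne]
    intro d _ hd
    by_contra hsq
    rw [moebius_eq_zero_of_not_squarefree hsq] at hd
    simp at hd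
  have hsplit : k.divisors.filter Squarefree
      = (u.divisors.filter Squarefree) ∪ (u.divisors.filter Squarefree).image (p * ·) := by
    ext d
    simp only [Finset.mem_union, Finset.mem_filter, Nat.mem_divisors, Finset.mem_image]
    constructor
    · rintro ⟨⟨hdk, -⟩, hsq⟩
      by_cases hpd : p ∣ d
      · right
        obtain ⟨e, rfl⟩ := hpd
        have hpe : ¬ p ∣ e := by
          intro hpe
          have : IsUnit p := hsq p (mul_dvd_mul_left p hpe)
          exact hp.one_lt.ne' (Nat.isUnit_iff.1 this)
        have hcop : Nat.Coprime e p := ((Nat.Prime.coprime_iff_not_dvd hp).2 hpe).symm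
        refine ⟨e, ⟨⟨?_, hu0⟩, hsq.of_mul_right⟩, rfl⟩
        -- e ∣ u
        have h1 : p * e ∣ p * (p ^ (a-1) * u) := by
          rw [← mul_assoc, ← hpow, hku]; exact hdk
        have h2 : e ∣ p ^ (a-1) * u := (mul_dvd_mul_iff_left (by omega : p ≠ 0)).1 h1
        exact (hcop.pow_right _).dvd_of_dvd_mul_left h2
      · left
        have hcop : Nat.Coprime d (p ^ a) :=
          Nat.Coprime.pow_right _ ((Nat.Prime.coprime_iff_not_dvd hp).2 hpd).symm
        refine ⟨⟨?_, hu0⟩, hsq⟩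
        rw [← hku] at hdk
        exact hcop.dvd_of_dvd_mul_left hdk
    · rintro (⟨⟨hdu, -⟩, hsq⟩ | ⟨e, ⟨⟨heu, -⟩, hsq⟩, rfl⟩)
      · exact ⟨⟨hdu.trans ⟨p^a, by rw [← hku]; ring⟩, hk⟩, hsq⟩
      · have hpe : ¬ p ∣ e := fun hpe => hpu (hpe.trans heu)
        refine ⟨⟨?_, hk⟩, ?_⟩
        · rw [← hku, hpow, mul_assoc]
          exact Nat.mul_dvd_mul_left p (Dvd.dvd.mul_left heu _)
        · rw [Nat.squarefree_mul_iff]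
          exact ⟨(Nat.Prime.coprime_iff_not_dvd hp).2 hpe, hp.squarefree, hsq⟩
  have hdisj : Disjoint (u.divisors.filter Squarefree)
      ((u.divisors.filter Squarefree).image (p * ·)) := by
    rw [Finset.disjoint_left]
    rintro d hd hd'
    obtain ⟨e, -, rfl⟩ := Finset.mem_image.1 hd'
    obtain ⟨hdu, -⟩ := Nat.mem_divisors.1 (Finset.mem_filter.1 hd).1
    exact hpu ((Dvd.intro e rfl).trans hdu)
  rw [hfilter, hsplit, Finset.sum_union hdisj,
    Finset.sum_image (fun x _ y _ h => Nat.eq_of_mul_eq_mul_left (by omega) h),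
    ← Finset.sum_add_distrib]
  refine Finset.dvd_sum fun e he => ?_
  obtain ⟨hed, hsq⟩ := Finset.mem_filter.1 he
  obtain ⟨heu, -⟩ := Nat.mem_divisors.1 hed
  have hpe : ¬ p ∣ e := fun hpe => hpu (hpe.trans heu)
  have hcop : Nat.Coprime p e := (Nat.Prime.coprime_iff_not_dvd hp).2 hpe
  have hmu : (μ (p*e) : ℤ) = -(μ e) := by
    rw [isMultiplicative_moebius.map_mul_of_coprime hcop, moebius_apply_prime hp]
    ring
  obtain ⟨u', huu⟩ := heu
  have he0 : e ≠ 0 := fun h0 => hu0 (by rw [huu, h0, zero_mul])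
  have hdiv1 : k / e = p ^ a * u' := by
    rw [← hku, huu]
    rw [show p ^ a * (e * u') = e * (p ^ a * u') by ring]
    exact Nat.mul_div_cancel_left _ (Nat.pos_of_ne_zero he0)
  have hdiv2 : k / (p * e) = p ^ (a-1) * u' := by
    rw [← hku, huu, hpow]
    rw [show p * p ^ (a-1) * (e * u') = (p * e) * (p ^ (a-1) * u') by ring]
    exact Nat.mul_div_cancel_left _ (by have := Nat.pos_of_ne_zero he0; nlinarith [hp.one_lt])
  rw [hdiv1, hdiv2, hmu]
  have := HG p a u' hp ha1
  have : (μ e : ℤ) * m (p^a * u') + -(μ e : ℤ) * m (p^(a-1) * u')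
      = (μ e : ℤ) * (m (p^a * u') - m (p^(a-1) * u')) := by ring
  rw [this]
  exact Dvd.dvd.mul_left (HG p a u' hp ha1) _

noncomputable def bseq (m : ℕ → ℤ) (k : ℕ) : ℤ :=
  (∑ d ∈ k.divisors, (μ d : ℤ) * m (k / d)) / k

lemma necklace_identity (HG : ∀ p a u : ℕ, p.Prime → 1 ≤ a →
      ((p:ℤ))^a ∣ m (p^a * u) - m (p^(a-1) * u)) :
    ∀ k : ℕ, 0 < k → ∑ j ∈ k.divisors, (j:ℤ) * bseq m j = m k := by
  have h := (ArithmeticFunction.sum_eq_iff_sum_mul_moebius_eq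
    (f := fun j => (j:ℤ) * bseq m j) (g := m)).2 ?_
  · exact fun k hk => h k hk
  · intro n hn
    simp only [Int.cast_id]
    rw [Nat.sum_divisorsAntidiagonal (f := fun d e => (μ d : ℤ) * m e)]
    exact (Int.mul_ediv_cancel' (sm_dvd m HG n (by omega))).symm
/-- `c` satisfies the recursion `N c_N = ∑_{k=1}^N a_k c_{N-k}`. -/
def RecSeq (a c : ℕ → ℚ) : Prop :=
  ∀ N : ℕ, 1 ≤ N → (N:ℚ) * c N = ∑ k ∈ range N, a (k+1) * c (N-1-k)

lemma RecSeq.unique {a c d : ℕ → ℚ} (hc : RecSeq a c) (hd : RecSeq a d)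
    (h0 : c 0 = d 0) : c = d := by
  funext N
  induction N using Nat.strong_induction_on with
  | _ N ih =>
    rcases Nat.eq_zero_or_pos N with rfl | hN
    · exact h0
    have hNQ : (N:ℚ) ≠ 0 := Nat.cast_ne_zero.2 (by omega)
    have e1 := hc N hN
    have e2 := hd N hN
    rw [Finset.sum_congr rfl (fun k hk => by
      rw [ih (N-1-k) (by have := Finset.mem_range.1 hk; omega)])] at e1
    have := e1.trans e2.symm
    exact mul_left_cancel₀ hNQ this

section ExpOf
variable (S : ℚ⟦X⟧) (hS : constantCoeff S = 0)

lemma coeff_pow_eq_zero (hS : constantCoeff S = 0) {N j : ℕ} (h : N < j) :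
    coeff N (S ^ j) = 0 := by
  have : (X : ℚ⟦X⟧) ^ j ∣ S ^ j := pow_dvd_pow_of_dvd (X_dvd_iff.2 hS) j
  obtain ⟨g, hg⟩ := this
  rw [hg, coeff_X_pow_mul' g j N, if_neg (by omega)]

noncomputable def Epart (M : ℕ) : ℚ⟦X⟧ := ∑ j ∈ range (M+1), ((j.factorial : ℚ))⁻¹ • S ^ j

lemma coeff_expOf_eq_Epart (hS : constantCoeff S = 0) {N M : ℕ} (h : N ≤ M) :
    coeff N (expOf S) = coeff N (Epart S M) := by
  rw [expOf, coeff_mk, Epart, map_sum]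
  rw [Finset.sum_congr rfl (fun j _ => by
    rw [coeff_smul, smul_eq_mul, ← div_eq_inv_mul] : ∀ j ∈ range (M+1),
      coeff N (((j.factorial:ℚ))⁻¹ • S ^ j) = coeff N (S ^ j) / (j.factorial : ℚ))]
  rcases eq_or_lt_of_le h with rfl | hlt
  · rfl
  · rw [← Finset.sum_range_add_sum_Ico _ (by omega : N+1 ≤ M+1)]
    have : ∑ j ∈ Finset.Ico (N+1) (M+1), coeff N (S ^ j) / (j.factorial : ℚ) = 0 :=
      Finset.sum_eq_zero fun j hj => by
        rw [coeff_pow_eq_zero S hS (by have := (Finset.mem_Ico.1 hj).1; omega), zero_div]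
    rw [this, add_zero]

lemma derivative_Epart (M : ℕ) :
    d⁄dX ℚ (Epart S (M+1)) = (d⁄dX ℚ S) * Epart S M := by
  rw [Epart, map_sum, Finset.sum_range_succ' _ (M+1)]
  have h0 : d⁄dX ℚ (((Nat.factorial 0 : ℚ))⁻¹ • S ^ 0) = 0 := by
    simp
  rw [h0, add_zero, Epart, Finset.mul_sum]
  refine Finset.sum_congr rfl fun i _ => ?_
  rw [Derivation.map_smul, Derivation.leibniz_pow, Nat.succ_sub_one]
  rw [smul_eq_mul, nsmul_eq_mul, PowerSeries.smul_eq_C_mul, PowerSeries.smul_eq_C_mul,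
    ← map_natCast (C (R := ℚ)) (i+1), ← mul_assoc, ← map_mul]
  have hfac : ((i+1).factorial : ℚ)⁻¹ * ((i+1 : ℕ) : ℚ) = (i.factorial : ℚ)⁻¹ := by
    have h1 : ((i+1).factorial : ℚ) = ((i+1 : ℕ) : ℚ) * (i.factorial : ℚ) := by
      rw [Nat.factorial_succ]; push_cast; ring
    rw [h1, mul_inv]
    have h2 : ((i+1 : ℕ) : ℚ) ≠ 0 := by positivity
    field_simp
  rw [hfac]
  ring

lemma expOf_constantCoeff : coeff 0 (expOf S) = 1 := by
  rw [expOf, coeff_mk]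
  simp

lemma expOf_rec (hS : constantCoeff S = 0) :
    RecSeq (fun k => (k:ℚ) * coeff k S) (fun N => coeff N (expOf S)) := by
  intro N hN
  have hN1 : N - 1 + 1 = N := by omega
  show (N:ℚ) * coeff N (expOf S)
      = ∑ k ∈ range N, (((k+1:ℕ)):ℚ) * coeff (k+1) S * coeff (N-1-k) (expOf S)
  have hcast : (N:ℚ) = ((N-1:ℕ):ℚ) + 1 := by rw [← hN1]; push_cast; ring
  calc (N:ℚ) * coeff N (expOf S)
      = coeff N (Epart S N) * (((N-1:ℕ):ℚ) + 1) := by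
        rw [coeff_expOf_eq_Epart S hS le_rfl, hcast]; ring
    _ = coeff (N-1) (d⁄dX ℚ (Epart S N)) := by
        rw [coeff_derivative, hN1]
    _ = coeff (N-1) ((d⁄dX ℚ S) * Epart S (N-1)) := by
        rw [show Epart S N = Epart S ((N-1)+1) from by rw [hN1], derivative_Epart]
    _ = ∑ k ∈ range ((N-1)+1), coeff k (d⁄dX ℚ S) * coeff (N-1-k) (Epart S (N-1)) := by
        rw [coeff_mul, Finset.Nat.sum_antidiagonal_eq_sum_range_succ_mk]
    _ = ∑ k ∈ range N, (((k+1:ℕ)):ℚ) * coeff (k+1) S * coeff (N-1-k) (expOf S) := by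
        rw [hN1]
        refine Finset.sum_congr rfl fun k hk => ?_
        rw [coeff_derivative, coeff_expOf_eq_Epart S hS
          (by have := Finset.mem_range.1 hk; omega : N-1-k ≤ N-1)]
        push_cast
        ring

end ExpOf

section LDsec

/-- Logarithmic-derivative relation: `X F' = F a`. -/
def LD (F a : ℚ⟦X⟧) : Prop := X * d⁄dX ℚ F = F * a

lemma LD.mul {F G a b : ℚ⟦X⟧} (hF : LD F a) (hG : LD G b) : LD (F * G) (a + b) := by
  unfold LD at *
  rw [Derivation.leibniz, smul_eq_mul, smul_eq_mul]
  linear_combination F * hG + G * hF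

lemma LD.one : LD 1 0 := by simp [LD]

lemma LD.unit_inv (u : ℚ⟦X⟧ˣ) {a : ℚ⟦X⟧} (h : LD u.val a) : LD ((u⁻¹ : ℚ⟦X⟧ˣ) : ℚ⟦X⟧) (-a) := by
  unfold LD at *
  rw [derivative_inv]
  have huu : ((u⁻¹ : ℚ⟦X⟧ˣ) : ℚ⟦X⟧) * (u : ℚ⟦X⟧) = 1 := u.inv_mul
  linear_combination (-(((u⁻¹ : ℚ⟦X⟧ˣ) : ℚ⟦X⟧))^2) * h
    - (((u⁻¹ : ℚ⟦X⟧ˣ) : ℚ⟦X⟧) * a) * huu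

lemma LD.pow {F a : ℚ⟦X⟧} (h : LD F a) : ∀ n : ℕ, LD (F ^ n) (n • a)
  | 0 => by simpa using LD.one
  | (n+1) => by
      have := (LD.pow h n).mul h
      rw [← pow_succ] at this
      rw [succ_nsmul]
      exact this

lemma LD.zpow (u : ℚ⟦X⟧ˣ) {a : ℚ⟦X⟧} (h : LD u.val a) (z : ℤ) :
    LD (((u ^ z : ℚ⟦X⟧ˣ) : ℚ⟦X⟧)) (z • a) := by
  rcases z with n | n
  · rw [Int.ofNat_eq_coe, zpow_natCast, Units.val_pow_eq_pow_val, natCast_zsmul]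
    exact h.pow n
  · rw [zpow_negSucc]
    have h1 : LD ((u ^ (n+1) : ℚ⟦X⟧ˣ) : ℚ⟦X⟧) ((n+1) • a) := by
      rw [Units.val_pow_eq_pow_val]; exact h.pow (n+1)
    have := LD.unit_inv (u ^ (n+1)) h1
    have hz : (Int.negSucc n) • a = -((n+1) • a) := by
      rw [Int.negSucc_eq, neg_smul, ← natCast_zsmul]
      norm_num
    rw [hz]
    exact this

lemma LD.prod {ι : Type*} (s : Finset ι) (U A : ι → ℚ⟦X⟧)
    (h : ∀ i ∈ s, LD (U i) (A i)) : LD (∏ i ∈ s, U i) (∑ i ∈ s, A i) := by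
  classical
  induction s using Finset.induction with
  | empty => simpa using LD.one
  | insert i s hnot ih =>
    rw [Finset.prod_insert hnot, Finset.sum_insert hnot]
    exact (h i (Finset.mem_insert_self i s)).mul
      (ih fun j hj => h j (Finset.mem_insert_of_mem hj))

lemma LD.coeff_rec {F a : ℚ⟦X⟧} (h : LD F a) (ha0 : coeff 0 a = 0) {N : ℕ} (hN : 1 ≤ N) :
    (N:ℚ) * coeff N F = ∑ k ∈ range N, coeff (k+1) a * coeff (N-1-k) F := by
  have hN1 : N - 1 + 1 = N := by omega
  have hL : coeff N (X * d⁄dX ℚ F) = (N:ℚ) * coeff N F := by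
    rw [← hN1, coeff_succ_X_mul, coeff_derivative, hN1,
      show ((N-1:ℕ):ℚ)+1 = (N:ℚ) from by rw [← hN1]; push_cast; ring]
    ring
  have hR : coeff N (F * a) = ∑ k ∈ range N, coeff (k+1) a * coeff (N-1-k) F := by
    rw [coeff_mul, Finset.Nat.sum_antidiagonal_eq_sum_range_succ_mk, Finset.sum_range_succ]
    rw [Nat.sub_self, ha0, mul_zero, add_zero]
    rw [← Finset.sum_range_reflect]
    refine Finset.sum_congr rfl fun k hk => ?_
    have hk' := Finset.mem_range.1 hk
    show coeff (N-1-k) F * coeff (N - (N-1-k)) a = _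
    have e3 : N - (N - 1 - k) = k + 1 := by omega
    rw [e3]
    ring
  rw [← hL, h, hR]

noncomputable def Dser (j : ℕ) : ℚ⟦X⟧ := mk fun k => if j ∣ k ∧ k ≠ 0 then 1 else 0

lemma coeff_Dser_zero (j : ℕ) : coeff 0 (Dser j) = 0 := by simp [Dser]

lemma oneSub_mul_Dser {j : ℕ} (hj : 1 ≤ j) : (1 - X^j) * Dser j = (X:ℚ⟦X⟧)^j := by
  ext k
  rw [sub_mul, one_mul, map_sub, coeff_X_pow_mul', coeff_X_pow, Dser, coeff_mk, coeff_mk]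
  by_cases hjk : j ≤ k
  · rw [if_pos hjk]
    by_cases hdvd : j ∣ k
    · rcases eq_or_ne k j with rfl | hne
      · simp [Nat.sub_self, hj, Nat.one_le_iff_ne_zero.1 hj]
      · have h1 : j ∣ k - j := (Nat.dvd_sub hdvd dvd_rfl)
        have h2 : k - j ≠ 0 := by omega
        have h3 : k ≠ 0 := by omega
        rw [if_pos ⟨hdvd, h3⟩, if_pos ⟨h1, h2⟩, if_neg hne]
        ring
    · have h1 : ¬ (j ∣ k - j ∧ k - j ≠ 0) := by
        rintro ⟨hd, hne⟩
        exact hdvd (by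
          have := Nat.dvd_add hd (dvd_refl j)
          rwa [Nat.sub_add_cancel hjk] at this)
      rw [if_neg (fun hc => hdvd hc.1), if_neg h1, if_neg (by rintro rfl; exact hdvd dvd_rfl)]
      ring
  · rw [if_neg hjk]
    have hkj : k ≠ j := by omega
    rcases Nat.eq_zero_or_pos k with rfl | hk
    · simp [hkj]
    · have : ¬ (j ∣ k ∧ k ≠ 0) := by
        rintro ⟨hd, -⟩
        exact hjk (Nat.le_of_dvd hk hd)
      rw [if_neg this, if_neg hkj]
      ring

lemma LD_oneSubXpow {j : ℕ} (hj : 1 ≤ j) :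
    LD (1 - (X:ℚ⟦X⟧)^j) (-((j:ℚ) • Dser j)) := by
  unfold LD
  have hd : d⁄dX ℚ (1 - (X:ℚ⟦X⟧)^j) = -((j:ℕ) • (X:ℚ⟦X⟧)^(j-1)) := by
    rw [map_sub, Derivation.map_one_eq_zero, zero_sub, Derivation.leibniz_pow, derivative_X,
      smul_eq_mul, mul_one]
  have key : (1 - (X:ℚ⟦X⟧)^j) * (-((j:ℚ) • Dser j)) = -((j:ℚ) • ((1-X^j) * Dser j)) := by
    rw [mul_neg, mul_smul_comm]
  have hX' : (X:ℚ⟦X⟧) * X^(j-1) = X^j := by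
    rw [← pow_succ']
    congr 1
    omega
  rw [hd, key, oneSub_mul_Dser hj, ← Nat.cast_smul_eq_nsmul ℚ j ((X:ℚ⟦X⟧)^(j-1)),
    mul_neg, mul_smul_comm, hX']

end LDsec

section UnitsPart

lemma isUnit_oneSubXpow (j : ℕ) : IsUnit (1 - (X:ℤ⟦X⟧)^(j+1)) := by
  rw [PowerSeries.isUnit_iff_constantCoeff]
  simp

noncomputable def vUnit (j : ℕ) : (ℤ⟦X⟧)ˣ := (isUnit_oneSubXpow j).unit

lemma vUnit_val (j : ℕ) : ((vUnit j : (ℤ⟦X⟧)ˣ) : ℤ⟦X⟧) = 1 - (X:ℤ⟦X⟧)^(j+1) :=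
  (isUnit_oneSubXpow j).unit_spec

lemma highOrder_mul {x g1 g2 : ℤ⟦X⟧} :
    (1 + x * g1) * (1 + x * g2) = 1 + x * (g1 + g2 + x * (g1 * g2)) := by ring

lemma highOrder_zpow (j : ℕ) (z : ℤ) :
    ∃ g, ((vUnit j ^ z : (ℤ⟦X⟧)ˣ) : ℤ⟦X⟧) = 1 + (X:ℤ⟦X⟧)^(j+1) * g := by
  have hbase : ∀ n : ℕ, ∃ g, ((vUnit j ^ (n:ℤ) : (ℤ⟦X⟧)ˣ) : ℤ⟦X⟧) = 1 + (X:ℤ⟦X⟧)^(j+1) * g := by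
    intro n
    induction n with
    | zero => exact ⟨0, by simp⟩
    | succ n ih =>
      obtain ⟨g, hg⟩ := ih
      refine ⟨g + (-1) + (X:ℤ⟦X⟧)^(j+1) * (g * (-1)), ?_⟩
      have : ((vUnit j ^ ((n:ℤ)+1) : (ℤ⟦X⟧)ˣ) : ℤ⟦X⟧)
          = ((vUnit j ^ (n:ℤ) : (ℤ⟦X⟧)ˣ) : ℤ⟦X⟧) * ((vUnit j : (ℤ⟦X⟧)ˣ) : ℤ⟦X⟧) := by
        rw [zpow_add_one, Units.val_mul]
      rw [show ((n+1:ℕ):ℤ) = (n:ℤ)+1 from by push_cast; ring, this, hg, vUnit_val, show (1 : ℤ⟦X⟧) - X^(j+1) = 1 + X^(j+1) * (-1) from by ring,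
        highOrder_mul]
  have hinv : ∀ u : (ℤ⟦X⟧)ˣ, (∃ g, (u : ℤ⟦X⟧) = 1 + (X:ℤ⟦X⟧)^(j+1) * g) →
      ∃ g, ((u⁻¹ : (ℤ⟦X⟧)ˣ) : ℤ⟦X⟧) = 1 + (X:ℤ⟦X⟧)^(j+1) * g := by
    rintro u ⟨g, hg⟩
    refine ⟨-(((u⁻¹ : (ℤ⟦X⟧)ˣ) : ℤ⟦X⟧) * g), ?_⟩
    have h1 : ((u⁻¹ : (ℤ⟦X⟧)ˣ) : ℤ⟦X⟧) * (1 + (X:ℤ⟦X⟧)^(j+1) * g) = 1 := by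
      rw [← hg]; exact u.inv_mul
    linear_combination h1
  rcases le_or_gt 0 z with hz | hz
  · obtain ⟨n, rfl⟩ := Int.eq_ofNat_of_zero_le hz
    exact hbase n
  · obtain ⟨n, rfl⟩ : ∃ n : ℕ, z = -(n:ℤ) := ⟨z.natAbs, by omega⟩
    obtain ⟨g, hg⟩ := hbase n
    have : (vUnit j ^ (-(n:ℤ)) : (ℤ⟦X⟧)ˣ) = (vUnit j ^ (n:ℤ))⁻¹ := by
      rw [zpow_neg]
    rw [this]
    exact hinv _ ⟨g, hg⟩

lemma coeff_mul_highOrder {F g : ℤ⟦X⟧} {j l : ℕ} (hl : l ≤ j) :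
    coeff l (F * (1 + (X:ℤ⟦X⟧)^(j+1) * g)) = coeff l F := by
  rw [mul_add, mul_one, map_add]
  have : coeff l (F * ((X:ℤ⟦X⟧)^(j+1) * g)) = 0 := by
    have hdvd : (X:ℤ⟦X⟧)^(j+1) ∣ F * ((X:ℤ⟦X⟧)^(j+1) * g) := ⟨F * g, by ring⟩
    exact (X_pow_dvd_iff.1 hdvd) l (by omega)
  rw [this, add_zero]

noncomputable def Uprod (e : ℕ → ℤ) (M : ℕ) : (ℤ⟦X⟧)ˣ :=
  ∏ i ∈ range M, (vUnit i) ^ (e (i+1))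

noncomputable def Aseq (e : ℕ → ℤ) (N : ℕ) : ℤ := coeff N ((Uprod e N : (ℤ⟦X⟧)ˣ) : ℤ⟦X⟧)

lemma Aseq_zero (e : ℕ → ℤ) : Aseq e 0 = 1 := by
  simp [Aseq, Uprod]

lemma coeff_Uprod_stable (e : ℕ → ℤ) {l M M' : ℕ} (h1 : l ≤ M) (h2 : M ≤ M') :
    coeff l ((Uprod e M' : (ℤ⟦X⟧)ˣ) : ℤ⟦X⟧) = coeff l ((Uprod e M : (ℤ⟦X⟧)ˣ) : ℤ⟦X⟧) := by
  induction M' , h2 using Nat.le_induction with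
  | base => rfl
  | succ M' hMM ih =>
    have : (Uprod e (M'+1) : ℤ⟦X⟧) = (Uprod e M' : ℤ⟦X⟧) * ((vUnit M' ^ (e (M'+1)) : (ℤ⟦X⟧)ˣ) : ℤ⟦X⟧) := by
      rw [Uprod, Finset.prod_range_succ, Units.val_mul]; rfl
    obtain ⟨g, hg⟩ := highOrder_zpow M' (e (M'+1))
    rw [this, hg, coeff_mul_highOrder (by omega), ih]

lemma coeff_Uprod_eq_Aseq (e : ℕ → ℤ) {l M : ℕ} (h1 : l ≤ M) :
    coeff l ((Uprod e M : (ℤ⟦X⟧)ˣ) : ℤ⟦X⟧) = Aseq e l :=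
  coeff_Uprod_stable e le_rfl h1

end UnitsPart

section Glue

/-- The coefficients of the `a`-series of the product, for `1 ≤ k ≤ M`. -/
lemma coeff_aU (e : ℕ → ℤ) (M k : ℕ) (hk1 : 1 ≤ k) (hkM : k ≤ M) :
    coeff k (∑ i ∈ range M, e (i+1) • (-((((i+1):ℕ):ℚ) • Dser (i+1))))
      = ∑ j ∈ k.divisors, (e j : ℚ) * (-(j:ℚ)) := by
  rw [map_sum]
  have hterm : ∀ i, coeff k (e (i+1) • (-((((i+1):ℕ):ℚ) • Dser (i+1))))
      = (e (i+1) : ℚ) * (-(((i+1):ℕ):ℚ)) * (if (i+1) ∣ k then 1 else 0) := by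
    intro i
    rw [map_zsmul, map_neg, coeff_smul, Dser, coeff_mk, smul_eq_mul]
    have : (if (i+1) ∣ k ∧ k ≠ 0 then (1:ℚ) else 0) = (if (i+1) ∣ k then 1 else 0) := by
      by_cases h : (i+1) ∣ k
      · rw [if_pos ⟨h, by omega⟩, if_pos h]
      · rw [if_neg (fun hc => h hc.1), if_neg h]
    rw [this, zsmul_eq_mul]
    push_cast
    ring
  rw [Finset.sum_congr rfl fun i _ => hterm i]
  have himg : ∑ i ∈ range M, (e (i+1) : ℚ) * (-(((i+1):ℕ):ℚ)) * (if (i+1) ∣ k then 1 else 0)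
      = ∑ j ∈ (range M).image (· + 1), (e j : ℚ) * (-(j:ℚ)) * (if j ∣ k then 1 else 0) := by
    rw [Finset.sum_image (fun x _ y _ h => by omega)]
  rw [himg]
  rw [← Finset.sum_subset (fun j hj => ?_) (fun j hj hnot => ?_)]
  · exact Finset.sum_congr rfl fun j hj =>
      by rw [if_pos (Nat.mem_divisors.1 hj).1, mul_one]
  · obtain ⟨hdvd, -⟩ := Nat.mem_divisors.1 hj
    have h1 : 1 ≤ j := Nat.pos_of_mem_divisors hj
    have h2 : j ≤ M := le_trans (Nat.le_of_dvd (by omega) hdvd) hkM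
    exact Finset.mem_image.2 ⟨j - 1, Finset.mem_range.2 (by omega), by omega⟩
  · rw [if_neg, mul_zero]
    intro hdvd
    exact hnot (Nat.mem_divisors.2 ⟨hdvd, by omega⟩)

noncomputable def mapQ : ℤ⟦X⟧ →+* ℚ⟦X⟧ := PowerSeries.map (Int.castRingHom ℚ)

noncomputable def uQ (i : ℕ) : (ℚ⟦X⟧)ˣ := Units.map mapQ.toMonoidHom (vUnit i)

lemma uQ_val (i : ℕ) : ((uQ i : (ℚ⟦X⟧)ˣ) : ℚ⟦X⟧) = 1 - (X:ℚ⟦X⟧)^(i+1) := by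
  have : ((uQ i : (ℚ⟦X⟧)ˣ) : ℚ⟦X⟧) = mapQ ((vUnit i : (ℤ⟦X⟧)ˣ) : ℤ⟦X⟧) := rfl
  rw [this, vUnit_val, map_sub, map_one, map_pow, mapQ, PowerSeries.map_X]

lemma LD_Uprod (e : ℕ → ℤ) (M : ℕ) :
    LD (mapQ ((Uprod e M : (ℤ⟦X⟧)ˣ) : ℤ⟦X⟧))
      (∑ i ∈ range M, e (i+1) • (-((((i+1):ℕ):ℚ) • Dser (i+1)))) := by
  have hval : mapQ ((Uprod e M : (ℤ⟦X⟧)ˣ) : ℤ⟦X⟧)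
      = ∏ i ∈ range M, ((uQ i ^ (e (i+1)) : (ℚ⟦X⟧)ˣ) : ℚ⟦X⟧) := by
    have h1 : mapQ ((Uprod e M : (ℤ⟦X⟧)ˣ) : ℤ⟦X⟧)
        = ((Units.map mapQ.toMonoidHom (Uprod e M) : (ℚ⟦X⟧)ˣ) : ℚ⟦X⟧) := rfl
    rw [h1, Uprod, map_prod]
    rw [show (∏ i ∈ range M, Units.map mapQ.toMonoidHom (vUnit i ^ (e (i+1))))
        = ∏ i ∈ range M, (uQ i ^ (e (i+1))) from
      Finset.prod_congr rfl fun i _ => by rw [uQ, map_zpow]]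
    exact map_prod (Units.coeHom ℚ⟦X⟧) _ _
  rw [hval]
  refine LD.prod (range M) _ _ fun i _ => ?_
  refine LD.zpow (uQ i) ?_ (e (i+1))
  rw [uQ_val]
  exact LD_oneSubXpow (by omega)

end Glue

end Aux

/-- Integrality of the coefficients of `exp(∑_{k≥1} (m_k/k) t^k) ∈ ℚ[[t]]`: there are
integers `A_k` with `exp(∑_{k≥1} (m_k/k) t^k) = 1 + ∑_{k≥1} A_k t^k`. -/
theorem exp_moment_series_integral_coeffs
    (n : ℕ) (hn : 1 ≤ n) (E : Finset (Fin n → ℤ)) (c : (Fin n → ℤ) → ℕ)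
    (hc : ∀ e ∈ E, 0 < c e)
    (hgen : AddSubgroup.closure {v : Fin n → ℤ | ∃ e ∈ E, ∃ f ∈ E, v = e - f} = ⊤) :
    ∃ A : ℕ → ℤ, A 0 = 1 ∧
      expOf (PowerSeries.mk fun k => if k = 0 then 0 else (moment E c k : ℚ) / (k : ℚ))
        = PowerSeries.mk fun k => (A k : ℚ) := by
  classical
  open Finset PowerSeries in
  set m : ℕ → ℤ := moment E c with hm
  have HG : ∀ p a u : ℕ, p.Prime → 1 ≤ a →
      ((p:ℤ))^a ∣ m (p^a * u) - m (p^(a-1) * u) := by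
    intro p a u hp ha
    have hinj : Function.Injective (fun g : Fin n → ℤ => p • g) := by
      intro x y hxy
      funext i
      have := congrFun hxy i
      simp only [Pi.smul_apply, nsmul_eq_mul] at this
      have hp0 : (p:ℤ) ≠ 0 := by exact_mod_cast hp.ne_zero
      exact mul_left_cancel₀ hp0 this
    exact gauss_cong_general p u a hp ha hinj (WL E c)
  set e : ℕ → ℤ := fun j => -(bseq m j) with he
  set A : ℕ → ℤ := Aseq e with hA
  set S : ℚ⟦X⟧ := PowerSeries.mk fun k => if k = 0 then 0 else (m k : ℚ) / (k : ℚ) with hSdef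
  have hS : constantCoeff S = 0 := by
    rw [hSdef, ← coeff_zero_eq_constantCoeff_apply, coeff_mk, if_pos rfl]
  have haS : ∀ k : ℕ, 1 ≤ k → (k:ℚ) * coeff k S = (m k : ℚ) := by
    intro k hk
    rw [hSdef, coeff_mk, if_neg (by omega)]
    field_simp
  have hArec : RecSeq (fun k => (k:ℚ) * coeff k S) (fun N => (A N : ℚ)) := by
    intro N hN
    show (N:ℚ) * ((A N : ℚ))
        = ∑ k ∈ range N, ((k+1:ℕ):ℚ) * coeff (k+1) S * ((A (N-1-k) : ℚ))
    have hLD := LD_Uprod e N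
    have ha0 : coeff 0 (∑ i ∈ range N, e (i+1) • (-((((i+1):ℕ):ℚ) • Dser (i+1)))) = 0 := by
      rw [map_sum]
      refine Finset.sum_eq_zero fun i _ => ?_
      rw [map_zsmul, map_neg, coeff_smul, coeff_Dser_zero]
      simp
    have hrec := hLD.coeff_rec ha0 hN
    have hcoeffU : ∀ l : ℕ, l ≤ N →
        coeff l (mapQ ((Uprod e N : (ℤ⟦X⟧)ˣ) : ℤ⟦X⟧)) = ((A l : ℤ) : ℚ) := by
      intro l hl
      rw [mapQ, PowerSeries.coeff_map, coeff_Uprod_eq_Aseq e hl]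
      rfl
    rw [hcoeffU N le_rfl] at hrec
    rw [hrec]
    refine Finset.sum_congr rfl fun k hk => ?_
    have hk' := Finset.mem_range.1 hk
    rw [hcoeffU (N-1-k) (by omega)]
    congr 1
    rw [coeff_aU e N (k+1) (by omega) (by omega)]
    rw [haS (k+1) (by omega)]
    have hneck := necklace_identity m HG (k+1) (by omega)
    rw [← hneck]
    push_cast
    refine Finset.sum_congr rfl fun j _ => ?_
    simp only [he]
    push_cast
    ring
  have hErec : RecSeq (fun k => (k:ℚ) * coeff k S) (fun N => coeff N (expOf S)) :=
    expOf_rec S hS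
  have h0 : coeff 0 (expOf S) = ((A 0 : ℤ) : ℚ) := by
    rw [expOf_constantCoeff, hA, Aseq_zero]
    norm_num
  have hfun := RecSeq.unique hErec hArec h0
  refine ⟨A, by rw [hA, Aseq_zero], ?_⟩
  ext N
  rw [coeff_mk]
  exact congrFun hfun N
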